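/- For every RDF graph G and every non-recursive SHACL document M, there exists a unique total assignment ρ that is faithful with respect to G and M̃ (the document M with all targets removed); moreover, every assignment σ that is faithful with respect to G and M equals ρ. -/
import Mathlib


/-!
STATEMENT 1.  For every graph and every (finite, name-unique, reference-closed)
non-recursive SHACL document `M` there is a unique total assignment faithful
w.r.t. `G` and `M̃`, and every assignment faithful w.r.t. `G` and `M`
coincides with it (on the shape names of `M`).
-/

namespace SHACL

/-- RDF nodes: a single infinite domain of RDF terms. -/
abbrev Node := ℕ

/-- Shape names. -/
abbrev SName := ℕ

/-- An RDF graph: a set of (subject, predicate, object) triples. -/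
abbrev Graph := Set (Node × Node × Node)

/-- Kleene's three truth values. -/
inductive K3 | t | f | u
deriving DecidableEq

/-- An assignment maps each node and shape name to `some true` (the shape
literal `s` is assigned), `some false` (the literal `¬s` is assigned) or
`none` (neither); this representation guarantees that `s` and `¬s` are never
assigned simultaneously. -/
abbrev Assignment := Node → SName → Option Bool

/-- SHACL constraints (abstract core syntax): the empty constraint, shape
references, equality with a constant, a graph atom (existence of a given
triple), existential quantification along a property, negation and
conjunction. -/
inductive Constraint
  | top
  | ref (s : SName)
  | eqc (c : Node)
  | hasTriple (p o : Node)
  | exPath (p : Node) (d : Constraint)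
  | not (d : Constraint)
  | and (d₁ d₂ : Constraint)

open Classical in
/-- Three-valued (Kleene) evaluation `⟦d⟧^{G,σ}(n)` of a constraint at a node:
a shape reference `s(x)` is `True` if `s ∈ σ(x)`, `False` if `¬s ∈ σ(x)` and
`Undefined` otherwise. -/
noncomputable def eval (G : Graph) (σ : Assignment) : Constraint → Node → K3
  | .top, _ => .t
  | .ref s, n =>
      match σ n s with
      | some true => .t
      | some false => .f
      | none => .u
  | .eqc c, n => if n = c then .t else .f
  | .hasTriple p o, n => if (n, p, o) ∈ G then .t else .f
  | .exPath p d, n =>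
      if ∃ m, (n, p, m) ∈ G ∧ eval G σ d m = .t then .t
      else if ∀ m, (n, p, m) ∈ G → eval G σ d m = .f then .f
      else .u
  | .not d, n =>
      match eval G σ d n with
      | .t => .f
      | .f => .t
      | .u => .u
  | .and d₁ d₂, n =>
      match eval G σ d₁ n, eval G σ d₂ n with
      | .f, _ => .f
      | _, .f => .f
      | .t, .t => .t
      | _, _ => .u

/-- A SHACL shape: a name, a target definition (a unary query over graphs)
and a constraint. -/
structure Shape where
  name : SName
  target : Graph → Set Node
  constraint : Constraint

/-- A SHACL document: a set of shapes. -/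
abbrev Document := Set Shape

/-- `M̃`: the document `M` with every target definition replaced by the empty
target. -/
def minusTargets (M : Document) : Document :=
  (fun sh => { name := sh.name, target := fun _ => (∅ : Set Node),
               constraint := sh.constraint : Shape }) '' M

/-- Faithfulness of an assignment `σ` w.r.t. a graph `G` and a document `M`:
(1) for every shape `⟨s,t,d⟩` of `M` and node `n`, `s ∈ σ(n)` iff
    `⟦d⟧^{G,σ}(n) = True` and `¬s ∈ σ(n)` iff `⟦d⟧^{G,σ}(n) = False`;
(2) every node targeted by `t` in `G` satisfies `s ∈ σ(n)`. -/
def Faithful (G : Graph) (σ : Assignment) (M : Document) : Prop :=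
  (∀ sh ∈ M, ∀ n : Node,
      (σ n sh.name = some true ↔ eval G σ sh.constraint n = .t) ∧
      (σ n sh.name = some false ↔ eval G σ sh.constraint n = .f)) ∧
  (∀ sh ∈ M, ∀ n ∈ sh.target G, σ n sh.name = some true)


/-- The shape names directly referenced by a constraint. -/
def Constraint.refs : Constraint → Set SName
  | .ref s => {s}
  | .not d => d.refs
  | .and d₁ d₂ => d₁.refs ∪ d₂.refs
  | .exPath _ d => d.refs
  | _ => ∅

/-- The shape names of a document. -/
def namesOf (M : Document) : Set SName := Shape.name '' M

/-- `s₁` directly references `s₂` in `M`: some shape of `M` named `s₁` has a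
constraint mentioning `s₂`. -/
def refersTo (M : Document) (s₁ s₂ : SName) : Prop :=
  ∃ sh ∈ M, sh.name = s₁ ∧ s₂ ∈ sh.constraint.refs

/-- A document is recursive if some shape (transitively) references itself. -/
def Recursive (M : Document) : Prop :=
  ∃ s, Relation.TransGen (refersTo M) s s

/-- An assignment is total w.r.t. a set of shape names if it assigns either
`s` or `¬s` to every node, for every shape name `s` in the set. -/
def Assignment.TotalOn (σ : Assignment) (S : Set SName) : Prop :=
  ∀ n : Node, ∀ s ∈ S, (σ n s).isSome

/-- Two assignments agree on the shape names of a document. -/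
def eqOn (M : Document) (σ ρ : Assignment) : Prop :=
  ∀ n : Node, ∀ s ∈ namesOf M, σ n s = ρ n s

/-! ### Auxiliary material for the proof -/

open Classical

/-- The flipped direct-reference relation: `rrel M a b` iff the shape named
`b` directly references `a`. -/
def rrel (M : Document) (a b : SName) : Prop := refersTo M b a

/-- Evaluation only depends on the assignment's values on referenced names. -/
lemma eval_congr (G : Graph) {σ σ' : Assignment} :
    ∀ d : Constraint, (∀ s ∈ d.refs, ∀ m, σ m s = σ' m s) →
      ∀ n, eval G σ d n = eval G σ' d n := by
  intro d
  induction d with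
  | top => intro _ n; rfl
  | ref s => intro h n; simp only [eval, h s rfl n]
  | eqc c => intro _ n; rfl
  | hasTriple p o => intro _ n; rfl
  | exPath p d ih =>
      intro h n
      have hm : ∀ m, eval G σ d m = eval G σ' d m := ih h
      simp only [eval, hm]
  | not d ih =>
      intro h n
      simp only [eval, ih h n]
  | and d₁ d₂ ih₁ ih₂ =>
      intro h n
      have h₁ := ih₁ (fun s hs m => h s (Or.inl hs) m) n
      have h₂ := ih₂ (fun s hs m => h s (Or.inr hs) m) n
      simp only [eval, h₁, h₂]

/-- If the assignment is defined on all referenced names, evaluation is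
two-valued. -/
lemma eval_total (G : Graph) {σ : Assignment} :
    ∀ d : Constraint, (∀ s ∈ d.refs, ∀ m, (σ m s).isSome) →
      ∀ n, eval G σ d n = .t ∨ eval G σ d n = .f := by
  intro d
  induction d with
  | top => intro _ n; exact Or.inl rfl
  | ref s =>
      intro h n
      have := h s rfl n
      cases hv : σ n s with
      | none => rw [hv] at this; simp at this
      | some b => cases b <;> simp [eval, hv]
  | eqc c => intro _ n; by_cases h : n = c <;> simp [eval, h]
  | hasTriple p o => intro _ n; by_cases h : (n, p, o) ∈ G <;> simp [eval, h]
  | exPath p d ih =>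
      intro h n
      by_cases h1 : ∃ m, (n, p, m) ∈ G ∧ eval G σ d m = .t
      · left; simp [eval, h1]
      · have h2 : ∀ m, (n, p, m) ∈ G → eval G σ d m = .f := by
          intro m hm
          rcases ih h m with ht | hf
          · exact absurd ⟨m, hm, ht⟩ h1
          · exact hf
        right
        simp only [eval]
        rw [if_neg h1]
        exact if_pos h2
  | not d ih =>
      intro h n
      rcases ih h n with h' | h' <;> simp [eval, h']
  | and d₁ d₂ ih₁ ih₂ =>
      intro h n
      rcases ih₁ (fun s hs m => h s (Or.inl hs) m) n with h1 | h1 <;>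
        rcases ih₂ (fun s hs m => h s (Or.inr hs) m) n with h2 | h2 <;>
        simp [eval, h1, h2]

/-- Non-recursiveness of a finite, reference-closed document makes the flipped
reference relation well-founded. -/
lemma rrel_wf (G : Graph) (M : Document) (hfin : M.Finite)
    (hclosed : ∀ sh ∈ M, Constraint.refs sh.constraint ⊆ namesOf M)
    (hnr : ¬ Recursive M) : WellFounded (rrel M) := by
  set T : SName → Set SName := fun s => {x | Relation.TransGen (rrel M) x s} with hT
  have hsub : ∀ s, T s ⊆ namesOf M := by
    intro s x hx
    obtain ⟨c, h, -⟩ := (Relation.TransGen.head'_iff).mp hx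
    obtain ⟨sh, hsh, -, hr⟩ := h
    exact hclosed sh hsh hr
  have hfinT : ∀ s, (T s).Finite := fun s => (hfin.image Shape.name).subset (hsub s)
  have hnc : ∀ s, ¬ Relation.TransGen (rrel M) s s := by
    intro s hs
    exact hnr ⟨s, (Relation.transGen_swap).mp hs⟩
  have key : ∀ a b, rrel M a b → (T a).ncard < (T b).ncard := by
    intro a b hab
    apply Set.ncard_lt_ncard _ (hfinT b)
    constructor
    · intro x hx
      exact Relation.TransGen.tail hx hab
    · intro hsub'
      exact hnc a (hsub' (Relation.TransGen.single hab))
  exact Subrelation.wf (fun {a b} h => key a b h)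
    (InvImage.wf (fun s => (T s).ncard) Nat.lt_wfRel.wf)

/-- One step of the construction of the canonical assignment. -/
noncomputable def buildF (G : Graph) (M : Document)
    (s : SName) (rec : ∀ s', rrel M s' s → Node → Option Bool) :
    Node → Option Bool :=
  if h : ∃ sh ∈ M, sh.name = s then
    fun n =>
      match eval G (fun m s' => if h' : rrel M s' s then rec s' h' m else none)
          h.choose.constraint n with
      | .t => some true
      | .f => some false
      | .u => none
  else fun _ => none

/-- The canonical assignment. -/
noncomputable def buildρ (G : Graph) (M : Document)
    (hwf : WellFounded (rrel M)) : Assignment :=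
  fun n s => hwf.fix (buildF G M) s n

lemma buildρ_eq (G : Graph) (M : Document) (hwf : WellFounded (rrel M))
    (hname : ∀ sh₁ ∈ M, ∀ sh₂ ∈ M, Shape.name sh₁ = Shape.name sh₂ → sh₁ = sh₂)
    (sh : Shape) (hsh : sh ∈ M) (n : Node) :
    buildρ G M hwf n sh.name =
      match eval G (buildρ G M hwf) sh.constraint n with
      | .t => some true
      | .f => some false
      | .u => none := by
  have hex : ∃ sh' ∈ M, sh'.name = sh.name := ⟨sh, hsh, rfl⟩
  have hch : hex.choose = sh :=
    hname _ hex.choose_spec.1 _ hsh hex.choose_spec.2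
  have hfix : buildρ G M hwf n sh.name
      = buildF G M sh.name (fun s' _ => hwf.fix (buildF G M) s') n := by
    show hwf.fix (buildF G M) sh.name n = _
    rw [WellFounded.fix_eq]
  rw [hfix]
  show (if h : ∃ sh' ∈ M, sh'.name = sh.name then
      fun n => match eval G (fun m s' => if h' : rrel M s' sh.name then
            hwf.fix (buildF G M) s' m else none) h.choose.constraint n with
        | .t => some true
        | .f => some false
        | .u => none
    else fun _ => none) n = _
  rw [dif_pos hex, hch]
  have hagree : ∀ s' ∈ sh.constraint.refs, ∀ m,
      (fun m s' => if h' : rrel M s' sh.name then hwf.fix (buildF G M) s' m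
        else none) m s' = buildρ G M hwf m s' := by
    intro s' hs' m
    have hr : rrel M s' sh.name := ⟨sh, hsh, rfl, hs'⟩
    simp only [dif_pos hr]
    rfl
  rw [eval_congr G sh.constraint hagree n]

lemma buildρ_total (G : Graph) (M : Document) (hwf : WellFounded (rrel M))
    (hname : ∀ sh₁ ∈ M, ∀ sh₂ ∈ M, Shape.name sh₁ = Shape.name sh₂ → sh₁ = sh₂)
    (hclosed : ∀ sh ∈ M, Constraint.refs sh.constraint ⊆ namesOf M) :
    (buildρ G M hwf).TotalOn (namesOf M) := by
  have H : ∀ s, s ∈ namesOf M → ∀ n, (buildρ G M hwf n s).isSome := by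
    intro s
    induction s using hwf.induction with
    | _ s IH =>
      intro hs n
      obtain ⟨sh, hsh, rfl⟩ := hs
      rw [buildρ_eq G M hwf hname sh hsh n]
      have hrefs : ∀ s' ∈ sh.constraint.refs, ∀ m,
          ((buildρ G M hwf) m s').isSome := by
        intro s' hs' m
        exact IH s' ⟨sh, hsh, rfl, hs'⟩ (hclosed sh hsh hs') m
      rcases eval_total G sh.constraint hrefs n with h | h <;> simp [h]
  exact fun n s hs => H s hs n

lemma buildρ_cond1 (G : Graph) (M : Document) (hwf : WellFounded (rrel M))
    (hname : ∀ sh₁ ∈ M, ∀ sh₂ ∈ M, Shape.name sh₁ = Shape.name sh₂ → sh₁ = sh₂)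
    (hclosed : ∀ sh ∈ M, Constraint.refs sh.constraint ⊆ namesOf M) :
    ∀ sh ∈ M, ∀ n : Node,
      (buildρ G M hwf n sh.name = some true ↔
        eval G (buildρ G M hwf) sh.constraint n = .t) ∧
      (buildρ G M hwf n sh.name = some false ↔
        eval G (buildρ G M hwf) sh.constraint n = .f) := by
  intro sh hsh n
  have he := buildρ_eq G M hwf hname sh hsh n
  have htot := buildρ_total G M hwf hname hclosed
  have hrefs : ∀ s' ∈ sh.constraint.refs, ∀ m,
      ((buildρ G M hwf) m s').isSome :=
    fun s' hs' m => htot m s' (hclosed sh hsh hs')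
  rcases eval_total G sh.constraint hrefs n with h | h <;>
    rw [h] at he <;> rw [he, h] <;> simp

/-- The central uniqueness lemma: any assignment satisfying the constraint
condition (1) agrees with the canonical assignment on the shape names. -/
lemma unique_aux (G : Graph) (M : Document) (hwf : WellFounded (rrel M))
    (hname : ∀ sh₁ ∈ M, ∀ sh₂ ∈ M, Shape.name sh₁ = Shape.name sh₂ → sh₁ = sh₂)
    (hclosed : ∀ sh ∈ M, Constraint.refs sh.constraint ⊆ namesOf M)
    (σ : Assignment)
    (hσ : ∀ sh ∈ M, ∀ n : Node,
      (σ n sh.name = some true ↔ eval G σ sh.constraint n = .t) ∧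
      (σ n sh.name = some false ↔ eval G σ sh.constraint n = .f)) :
    ∀ s ∈ namesOf M, ∀ n : Node, σ n s = buildρ G M hwf n s := by
  intro s
  induction s using hwf.induction with
  | _ s IH =>
    intro hs n
    obtain ⟨sh, hsh, rfl⟩ := hs
    have htot := buildρ_total G M hwf hname hclosed
    have hev : eval G σ sh.constraint n = eval G (buildρ G M hwf) sh.constraint n :=
      eval_congr G sh.constraint
        (fun s' hs' m => IH s' ⟨sh, hsh, rfl, hs'⟩ (hclosed sh hsh hs') m) n
    have hrefs : ∀ s' ∈ sh.constraint.refs, ∀ m,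
        ((buildρ G M hwf) m s').isSome :=
      fun s' hs' m => htot m s' (hclosed sh hsh hs')
    have c1σ := hσ sh hsh n
    have c1ρ := buildρ_cond1 G M hwf hname hclosed sh hsh n
    rcases eval_total G sh.constraint hrefs n with h | h
    · rw [c1σ.1.mpr (hev.trans h), c1ρ.1.mpr h]
    · rw [c1σ.2.mpr (hev.trans h), c1ρ.2.mpr h]

/-- Lemma on non-recursive documents: for every graph `G`
and non-recursive SHACL document `M` (a finite set of shapes whose names
uniquely identify them and whose shape references stay inside the document),
there is a total assignment `ρ` faithful w.r.t. `G` and `M̃`, it is unique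
(as a map on the shape names of `M`), and every assignment faithful w.r.t.
`G` and `M` equals `ρ`. -/
theorem unique_total_faithful_of_nonRecursive
    (G : Graph) (M : Document)
    (hfin : M.Finite)
    (hname : ∀ sh₁ ∈ M, ∀ sh₂ ∈ M, Shape.name sh₁ = Shape.name sh₂ → sh₁ = sh₂)
    (hclosed : ∀ sh ∈ M, Constraint.refs sh.constraint ⊆ namesOf M)
    (hnr : ¬ Recursive M) :
    ∃ ρ : Assignment,
      ρ.TotalOn (namesOf M) ∧ Faithful G ρ (minusTargets M) ∧
      (∀ ρ' : Assignment, ρ'.TotalOn (namesOf M) →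
          Faithful G ρ' (minusTargets M) → eqOn M ρ' ρ) ∧
      (∀ σ : Assignment, Faithful G σ M → eqOn M σ ρ) := by
  have hwf := rrel_wf G M hfin hclosed hnr
  refine ⟨buildρ G M hwf, buildρ_total G M hwf hname hclosed, ?_, ?_, ?_⟩
  · constructor
    · rintro sh' ⟨sh, hsh, rfl⟩ n
      exact buildρ_cond1 G M hwf hname hclosed sh hsh n
    · rintro sh' ⟨sh, hsh, rfl⟩ n hn
      exact absurd hn (Set.notMem_empty n)
  · intro ρ' _ hF
    have hσ : ∀ sh ∈ M, ∀ n : Node,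
        (ρ' n sh.name = some true ↔ eval G ρ' sh.constraint n = .t) ∧
        (ρ' n sh.name = some false ↔ eval G ρ' sh.constraint n = .f) := by
      intro sh hsh n
      exact hF.1 _ ⟨sh, hsh, rfl⟩ n
    exact fun n s hs => unique_aux G M hwf hname hclosed ρ' hσ s hs n
  · intro σ hF
    exact fun n s hs => unique_aux G M hwf hname hclosed σ hF.1 s hs n

end SHACL
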